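/- arXiv:1712.07533 — 5 statements merged into one kernel-verified Lean document; each statement's English description precedes it below -/
import Mathlib

section
/- If λ ≠ 0, then for every nonzero vector v ∈ ℂ^{l+1}, the limit lim_{n→∞} ‖Λ^n v‖^{1/n} exists and equals |λ|, where Λ is the Jordan block of eigenvalue λ and ‖·‖ is the sup norm on ℂ^{l+1}. -/
open Finset Filter Matrix

namespace JordanGrowthAux

variable {l : ℕ}

/-- The nilpotent shift matrix with `1` on the subdiagonal. -/
def shiftN (l : ℕ) : Matrix (Fin (l+1)) (Fin (l+1)) ℂ :=
  fun i j => if (i : ℕ) = (j : ℕ) + 1 then 1 else 0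

lemma mulVec_norm_le (A : Matrix (Fin (l+1)) (Fin (l+1)) ℂ) {c : ℝ}
    (h : ∀ i j, ‖A i j‖ ≤ c) (w : Fin (l+1) → ℂ) :
    ‖A.mulVec w‖ ≤ (((l:ℝ)+1) * c) * ‖w‖ := by
  have hc : 0 ≤ c := le_trans (norm_nonneg _) (h 0 0)
  rw [pi_norm_le_iff_of_nonneg (by positivity)]
  intro i
  calc ‖A.mulVec w i‖ = ‖∑ j, A i j * w j‖ := by simp [Matrix.mulVec, dotProduct]
    _ ≤ ∑ j, ‖A i j * w j‖ := norm_sum_le _ _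
    _ ≤ ∑ _j : Fin (l+1), c * ‖w‖ := by
        apply Finset.sum_le_sum; intro j _
        rw [norm_mul]
        exact mul_le_mul (h i j) (norm_le_pi_norm w j) (norm_nonneg _) hc
    _ = (((l:ℝ)+1) * c) * ‖w‖ := by
        rw [Finset.sum_const, Finset.card_univ, Fintype.card_fin, nsmul_eq_mul]
        push_cast; ring

lemma opBound_pow {A : Matrix (Fin (l+1)) (Fin (l+1)) ℂ} {c : ℝ} (hc : 0 ≤ c)
    (h : ∀ w, ‖A.mulVec w‖ ≤ c * ‖w‖) :
    ∀ (m : ℕ) (w : Fin (l+1) → ℂ), ‖(A^m).mulVec w‖ ≤ c^m * ‖w‖ := by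
  intro m
  induction m with
  | zero => intro w; simp [Matrix.one_mulVec]
  | succ m ih =>
      intro w
      rw [pow_succ, ← Matrix.mulVec_mulVec]
      calc ‖(A^m).mulVec (A.mulVec w)‖ ≤ c^m * ‖A.mulVec w‖ := ih _
        _ ≤ c^m * (c * ‖w‖) := mul_le_mul_of_nonneg_left (h w) (pow_nonneg hc m)
        _ = c^(m+1) * ‖w‖ := by ring

lemma shiftN_pow_mulVec_eq_zero :
    ∀ (k : ℕ) (w : Fin (l+1) → ℂ) (i : Fin (l+1)), (i:ℕ) < k →
      ((shiftN l)^k).mulVec w i = 0 := by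
  intro k
  induction k with
  | zero => intro w i h; omega
  | succ k ih =>
      intro w i hi
      rw [pow_succ', ← Matrix.mulVec_mulVec]
      set u := ((shiftN l)^k).mulVec w with hu
      show ∑ j, shiftN l i j * u j = 0
      apply Finset.sum_eq_zero
      intro j _
      by_cases h : (i:ℕ) = (j:ℕ) + 1
      · rw [shiftN, if_pos h, one_mul]
        exact ih w j (by omega)
      · rw [shiftN, if_neg h, zero_mul]

lemma shiftN_pow_nil : (shiftN l)^(l+1) = 0 := by
  ext i j
  have h := shiftN_pow_mulVec_eq_zero (l+1) (Pi.single j 1) i i.isLt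
  rw [Matrix.mulVec_single] at h
  simpa using h

lemma sum_mulVec {ι : Type*} (s : Finset ι) (f : ι → Matrix (Fin (l+1)) (Fin (l+1)) ℂ)
    (w : Fin (l+1) → ℂ) :
    (∑ k ∈ s, f k).mulVec w = ∑ k ∈ s, (f k).mulVec w :=
  map_sum (Matrix.mulVec.addMonoidHomLeft w) f s

lemma key_growth (a : ℂ) (ha : a ≠ 0) (M : Matrix (Fin (l+1)) (Fin (l+1)) ℂ) (c : ℝ) (hc : 0 ≤ c)
    (hM : ∀ w, ‖M.mulVec w‖ ≤ c * ‖w‖) (hnil : M ^ (l+1) = 0) (n : ℕ) (w : Fin (l+1) → ℂ) :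
    ‖((a • (1 : Matrix (Fin (l+1)) (Fin (l+1)) ℂ) + M) ^ n).mulVec w‖ ≤
      (((l:ℝ)+1) * (max 1 c)^l * (max 1 ‖a‖⁻¹)^l) * ((n:ℝ)+1)^l * ‖a‖^n * ‖w‖ := by
  have hcomm : Commute (a • (1 : Matrix (Fin (l+1)) (Fin (l+1)) ℂ)) M :=
    (Commute.one_left M).smul_left a
  have hexp : (a • (1 : Matrix (Fin (l+1)) (Fin (l+1)) ℂ) + M)^n
      = ∑ k ∈ Finset.range (n+1), ((n.choose k : ℂ) * a^k) • M^(n-k) := by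
    rw [hcomm.add_pow]
    apply Finset.sum_congr rfl
    intro k _
    rw [smul_pow, one_pow, smul_mul_assoc, one_mul]
    calc (a^k • M^(n-k)) * (n.choose k : Matrix (Fin (l+1)) (Fin (l+1)) ℂ)
        = (n.choose k) • (a^k • M^(n-k)) := (nsmul_eq_mul' _ _).symm
      _ = ((n.choose k : ℂ)) • (a^k • M^(n-k)) := (Nat.cast_smul_eq_nsmul ℂ _ _).symm
      _ = ((n.choose k : ℂ) * a^k) • M^(n-k) := by rw [smul_smul]
  rw [hexp]
  have hmv : (∑ k ∈ Finset.range (n+1), ((n.choose k : ℂ) * a^k) • M^(n-k)).mulVec w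
      = ∑ k ∈ Finset.range (n+1), ((n.choose k : ℂ) * a^k) • (M^(n-k)).mulVec w := by
    rw [show (∑ k ∈ Finset.range (n+1), ((n.choose k : ℂ) * a^k) • M^(n-k)).mulVec w
        = Matrix.mulVec.addMonoidHomLeft w (∑ k ∈ Finset.range (n+1),
            ((n.choose k : ℂ) * a^k) • M^(n-k)) from rfl]
    rw [map_sum]
    apply Finset.sum_congr rfl
    intro k _
    exact Matrix.smul_mulVec ((n.choose k : ℂ) * a^k) (M^(n-k)) w
  rw [hmv]
  set B : ℝ := (max 1 c)^l * (max 1 ‖a‖⁻¹)^l * (((n:ℝ)+1)^l * ‖a‖^n * ‖w‖) with hB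
  have hBnn : 0 ≤ B := by positivity
  have hna : (0:ℝ) < ‖a‖ := norm_pos_iff.mpr ha
  calc ‖∑ k ∈ Finset.range (n+1), ((n.choose k : ℂ) * a^k) • (M^(n-k)).mulVec w‖
      ≤ ∑ k ∈ Finset.range (n+1), ‖((n.choose k : ℂ) * a^k) • (M^(n-k)).mulVec w‖ :=
        norm_sum_le _ _
    _ ≤ ∑ k ∈ Finset.range (n+1), (if n - k ≤ l then B else 0) := by
        apply Finset.sum_le_sum
        intro k hk
        have hkn : k ≤ n := by simpa using Nat.lt_succ_iff.mp (Finset.mem_range.mp hk)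
        rw [norm_smul, norm_mul, norm_pow]
        by_cases hkl : n - k ≤ l
        · rw [if_pos hkl]
          have h1 : ‖(n.choose k : ℂ)‖ ≤ ((n:ℝ)+1)^l := by
            rw [Complex.norm_natCast]
            have h1n : n.choose k ≤ (n+1)^l := by
              calc n.choose k = n.choose (n - k) := (Nat.choose_symm hkn).symm
                _ ≤ n ^ (n-k) := Nat.choose_le_pow _ _
                _ ≤ (n+1) ^ (n-k) := Nat.pow_le_pow_left (Nat.le_succ n) _
                _ ≤ (n+1) ^ l := Nat.pow_le_pow_right (by omega) hkl
            calc ((n.choose k : ℝ)) ≤ (((n+1)^l : ℕ) : ℝ) := Nat.cast_le.mpr h1n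
              _ = ((n:ℝ)+1)^l := by push_cast; ring
          have h2 : ‖a‖^k ≤ ‖a‖^n * (max 1 ‖a‖⁻¹)^l := by
            have hsplit : ‖a‖^n = ‖a‖^k * ‖a‖^(n-k) := by
              rw [← pow_add]; congr 1; omega
            have hinv : (‖a‖⁻¹)^(n-k) ≤ (max 1 ‖a‖⁻¹)^l :=
              le_trans (pow_le_pow_left₀ (by positivity) (le_max_right 1 _) _)
                (pow_le_pow_right₀ (le_max_left 1 _) hkl)
            calc ‖a‖^k = ‖a‖^k * (‖a‖^(n-k) * (‖a‖⁻¹)^(n-k)) := by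
                  rw [← mul_pow, mul_inv_cancel₀ hna.ne', one_pow, mul_one]
              _ ≤ ‖a‖^k * (‖a‖^(n-k) * (max 1 ‖a‖⁻¹)^l) := by
                  apply mul_le_mul_of_nonneg_left _ (by positivity)
                  exact mul_le_mul_of_nonneg_left hinv (by positivity)
              _ = ‖a‖^n * (max 1 ‖a‖⁻¹)^l := by rw [hsplit]; ring
          have h3 : ‖(M^(n-k)).mulVec w‖ ≤ (max 1 c)^l * ‖w‖ := by
            refine le_trans (opBound_pow hc hM (n-k) w) ?_
            apply mul_le_mul_of_nonneg_right _ (norm_nonneg w)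
            exact le_trans (pow_le_pow_left₀ hc (le_max_right 1 _) _)
              (pow_le_pow_right₀ (le_max_left 1 _) hkl)
          calc ‖(n.choose k : ℂ)‖ * ‖a‖^k * ‖(M^(n-k)).mulVec w‖
              ≤ (((n:ℝ)+1)^l * (‖a‖^n * (max 1 ‖a‖⁻¹)^l)) * ((max 1 c)^l * ‖w‖) := by
                apply mul_le_mul _ h3 (norm_nonneg _) (by positivity)
                exact mul_le_mul h1 h2 (by positivity) (by positivity)
            _ = B := by rw [hB]; ring
        · rw [if_neg hkl]
          have hz : M^(n-k) = 0 := by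
            have h5 : n - k = (l+1) + (n - k - (l+1)) := by omega
            rw [h5, pow_add, hnil, zero_mul]
          simp [hz]
    _ = ((Finset.range (n+1)).filter (fun k => n - k ≤ l)).card • B := by
        rw [← Finset.sum_filter, Finset.sum_const]
    _ ≤ (((l:ℝ)+1)) * B := by
        rw [nsmul_eq_mul]
        apply mul_le_mul_of_nonneg_right _ hBnn
        have hcard : ((Finset.range (n+1)).filter (fun k => n - k ≤ l)).card ≤ l + 1 := by
          have hsub : (Finset.range (n+1)).filter (fun k => n - k ≤ l) ⊆ Finset.Icc (n - l) n := by
            intro k hk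
            simp only [Finset.mem_filter, Finset.mem_range] at hk
            rw [Finset.mem_Icc]; omega
          calc ((Finset.range (n+1)).filter (fun k => n - k ≤ l)).card
              ≤ (Finset.Icc (n - l) n).card := Finset.card_le_card hsub
            _ = n + 1 - (n - l) := Nat.card_Icc _ _
            _ ≤ l + 1 := by omega
        calc (((Finset.range (n+1)).filter (fun k => n - k ≤ l)).card : ℝ)
            ≤ ((l+1 : ℕ) : ℝ) := Nat.cast_le.mpr hcard
          _ = (l:ℝ)+1 := by push_cast; ring
    _ = (((l:ℝ)+1) * (max 1 c)^l * (max 1 ‖a‖⁻¹)^l) * ((n:ℝ)+1)^l * ‖a‖^n * ‖w‖ := by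
        rw [hB]; ring

lemma tendsto_aux (c : ℝ) (hc : 0 < c) (b : ℝ) :
    Tendsto (fun n : ℕ => (c * ((n:ℝ)+1)^b) ^ ((n:ℝ)⁻¹)) atTop (nhds 1) := by
  have hA : Tendsto (fun n : ℕ => Real.log ((n:ℝ)+1) / ((n:ℝ)+1)) atTop (nhds 0) := by
    have h0 : Tendsto (fun x : ℝ => Real.log x / x) atTop (nhds 0) :=
      Real.isLittleO_log_id_atTop.tendsto_div_nhds_zero
    exact h0.comp (tendsto_atTop_add_const_right _ 1 tendsto_natCast_atTop_atTop)
  have hB : Tendsto (fun n : ℕ => ((n:ℝ)+1) * (n:ℝ)⁻¹) atTop (nhds 1) := by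
    have h1 : Tendsto (fun n : ℕ => 1 + (n:ℝ)⁻¹) atTop (nhds (1+0)) :=
      tendsto_const_nhds.add tendsto_inv_atTop_nhds_zero_nat
    rw [add_zero] at h1
    apply h1.congr'
    filter_upwards [eventually_ge_atTop 1] with n hn
    have hn0 : (n:ℝ) ≠ 0 := Nat.cast_ne_zero.mpr (by omega)
    field_simp
  have h2 : Tendsto (fun n : ℕ => Real.log ((n:ℝ)+1) * (n:ℝ)⁻¹) atTop (nhds 0) := by
    have h3 := hA.mul hB
    rw [zero_mul] at h3
    apply h3.congr
    intro n
    have hne : ((n:ℝ)+1) ≠ 0 := by positivity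
    field_simp
  have hlog : Tendsto (fun n : ℕ => (Real.log c + b * Real.log ((n:ℝ)+1)) * (n:ℝ)⁻¹)
      atTop (nhds 0) := by
    have h1 : Tendsto (fun n : ℕ => Real.log c * (n:ℝ)⁻¹) atTop (nhds 0) := by
      have := tendsto_inv_atTop_nhds_zero_nat.const_mul (Real.log c)
      simpa using this
    have h4 := h1.add (h2.const_mul b)
    rw [mul_zero, add_zero] at h4
    apply h4.congr
    intro n
    ring
  have hexp := (Real.continuous_exp.tendsto 0).comp hlog
  rw [Real.exp_zero] at hexp
  apply hexp.congr
  intro n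
  have hp1 : (0:ℝ) < (n:ℝ)+1 := by positivity
  have hpos : 0 < c * ((n:ℝ)+1)^b := by positivity
  rw [Real.rpow_def_of_pos hpos, Real.log_mul hc.ne' (by positivity),
    Real.log_rpow hp1]
  rfl

end JordanGrowthAux

/-- The `(l+1)×(l+1)` lower-triangular Jordan block with `lam` on the diagonal
and `1` on the subdiagonal. -/
def jordanBlock (l : ℕ) (lam : ℂ) : Matrix (Fin (l + 1)) (Fin (l + 1)) ℂ :=
  fun i j => if (i : ℕ) = (j : ℕ) then lam else if (i : ℕ) = (j : ℕ) + 1 then 1 else 0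

namespace JordanGrowthAux

lemma jordan_decomp (l : ℕ) (lam : ℂ) :
    jordanBlock l lam = lam • (1 : Matrix (Fin (l+1)) (Fin (l+1)) ℂ) + shiftN l := by
  ext i j
  simp only [jordanBlock, shiftN, Matrix.add_apply, Matrix.smul_apply, Matrix.one_apply,
    smul_eq_mul]
  by_cases h : (i:ℕ) = (j:ℕ)
  · have hij : i = j := Fin.ext h
    subst hij
    simp [mul_one]
  · have hne : i ≠ j := fun hh => h (by rw [hh])
    simp [h, hne]

lemma norm_shiftN_le (l : ℕ) (w : Fin (l+1) → ℂ) :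
    ‖(shiftN l).mulVec w‖ ≤ ((l:ℝ)+1) * ‖w‖ := by
  have h := mulVec_norm_le (shiftN l) (c := 1) (fun i j => by
    simp only [shiftN]; split_ifs <;> simp) w
  simpa using h

lemma jordan_inverse (l : ℕ) (lam : ℂ) (hlam : lam ≠ 0) :
    ∃ B : Matrix (Fin (l+1)) (Fin (l+1)) ℂ, ∃ E,
    B = lam⁻¹ • (1 : Matrix (Fin (l+1)) (Fin (l+1)) ℂ) + E ∧
    B * jordanBlock l lam = 1 ∧ jordanBlock l lam * B = 1 ∧
    E ^ (l+1) = 0 ∧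
    (∀ w, ‖E.mulVec w‖ ≤ (‖lam⁻¹‖ * ((‖lam⁻¹‖ * ((l:ℝ)+1)) *
        (∑ k ∈ Finset.range l, (‖lam⁻¹‖ * ((l:ℝ)+1))^k))) * ‖w‖) := by
  set x : Matrix (Fin (l+1)) (Fin (l+1)) ℂ := (-lam⁻¹) • shiftN l with hx
  have hxnil : x^(l+1) = 0 := by rw [hx, smul_pow, shiftN_pow_nil, smul_zero]
  set T : Matrix (Fin (l+1)) (Fin (l+1)) ℂ := ∑ k ∈ Finset.range l, x^k with hT
  set S : Matrix (Fin (l+1)) (Fin (l+1)) ℂ := ∑ k ∈ Finset.range (l+1), x^k with hS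
  have hS1 : S = 1 + x * T := by
    rw [hS, Finset.sum_range_succ']
    simp only [pow_zero, pow_succ']
    rw [← Finset.mul_sum, ← hT]; exact add_comm _ _
  have hgeom : S * (1 - x) = 1 := by
    have h := geom_sum_mul x (l+1)
    rw [hxnil] at h
    have h2 : S * (1 - x) = -(S * (x - 1)) := by noncomm_ring
    rw [h2, hS, h]; simp
  have hJ : jordanBlock l lam = lam • (1 - x) := by
    rw [jordan_decomp]
    have hlx : lam • x = -(shiftN l) := by
      rw [hx, smul_smul, mul_neg, mul_inv_cancel₀ hlam, neg_smul, one_smul]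
    rw [smul_sub, hlx, sub_neg_eq_add]
  refine ⟨lam⁻¹ • S, lam⁻¹ • (x * T), ?_, ?_, ?_, ?_, ?_⟩
  · rw [hS1, smul_add]
  · rw [hJ, smul_mul_smul_comm, inv_mul_cancel₀ hlam, one_smul, hgeom]
  · rw [mul_eq_one_comm]
    rw [hJ, smul_mul_smul_comm, inv_mul_cancel₀ hlam, one_smul, hgeom]
  · have hcomm : Commute x T := Commute.sum_right _ _ _ (fun k _ => (Commute.refl x).pow_right k)
    rw [smul_pow, hcomm.mul_pow, hxnil, zero_mul, smul_zero]
  · intro w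
    set cx : ℝ := ‖lam⁻¹‖ * ((l:ℝ)+1) with hcx
    have hcx0 : 0 ≤ cx := by positivity
    have hxb : ∀ u, ‖x.mulVec u‖ ≤ cx * ‖u‖ := by
      intro u
      rw [hx, Matrix.smul_mulVec, norm_smul, norm_neg]
      rw [hcx, mul_assoc]
      exact mul_le_mul_of_nonneg_left (norm_shiftN_le l u) (norm_nonneg _)
    have hxk : ∀ (k : ℕ) (u : Fin (l+1) → ℂ), ‖(x^k).mulVec u‖ ≤ cx^k * ‖u‖ := by
      intro k
      induction k with
      | zero => intro u; simp [Matrix.one_mulVec]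
      | succ k ih =>
          intro u
          rw [pow_succ, ← Matrix.mulVec_mulVec]
          calc ‖(x^k).mulVec (x.mulVec u)‖ ≤ cx^k * ‖x.mulVec u‖ := ih _
            _ ≤ cx^k * (cx * ‖u‖) := mul_le_mul_of_nonneg_left (hxb u) (pow_nonneg hcx0 k)
            _ = cx^(k+1) * ‖u‖ := by ring
    have hTb : ∀ u, ‖T.mulVec u‖ ≤ (∑ k ∈ Finset.range l, cx^k) * ‖u‖ := by
      intro u
      rw [hT, sum_mulVec]
      calc ‖∑ k ∈ Finset.range l, (x^k).mulVec u‖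
          ≤ ∑ k ∈ Finset.range l, ‖(x^k).mulVec u‖ := norm_sum_le _ _
        _ ≤ ∑ k ∈ Finset.range l, cx^k * ‖u‖ := Finset.sum_le_sum (fun k _ => hxk k u)
        _ = (∑ k ∈ Finset.range l, cx^k) * ‖u‖ := by rw [Finset.sum_mul]
    set cT : ℝ := ∑ k ∈ Finset.range l, cx^k with hcT
    have hcT0 : 0 ≤ cT := Finset.sum_nonneg (fun k _ => pow_nonneg hcx0 k)
    rw [Matrix.smul_mulVec, norm_smul, ← Matrix.mulVec_mulVec]
    rw [mul_assoc]
    apply mul_le_mul_of_nonneg_left _ (norm_nonneg _)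
    calc ‖x.mulVec (T.mulVec w)‖ ≤ cx * ‖T.mulVec w‖ := hxb _
      _ ≤ cx * (cT * ‖w‖) := mul_le_mul_of_nonneg_left (hTb w) hcx0
      _ = cx * cT * ‖w‖ := by ring

end JordanGrowthAux

/-- `‖·‖` on `Fin (l+1) → ℂ` is the sup norm (the Pi norm). -/
theorem jordan_pow_mulVec_growth (l : ℕ) (lam : ℂ) (hlam : lam ≠ 0)
    (v : Fin (l + 1) → ℂ) (hv : v ≠ 0) :
    Filter.Tendsto (fun n : ℕ => ‖((jordanBlock l lam) ^ n).mulVec v‖ ^ ((n : ℝ)⁻¹))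
      Filter.atTop (nhds ‖lam‖) := by
  classical
  obtain ⟨B, E, hBdec, hBA, hAB, hEnil, hEb⟩ := JordanGrowthAux.jordan_inverse l lam hlam
  set r : ℝ := ‖lam‖ with hrdef
  have hr0 : (0:ℝ) < r := norm_pos_iff.mpr hlam
  have hv0 : (0:ℝ) < ‖v‖ := norm_pos_iff.mpr hv
  set C₁ : ℝ := ((l:ℝ)+1) * (max 1 ((l:ℝ)+1))^l * (max 1 ‖lam‖⁻¹)^l with hC₁
  have hC₁0 : (0:ℝ) < C₁ := by positivity
  have hupper : ∀ n : ℕ, ‖((jordanBlock l lam)^n).mulVec v‖ ≤ C₁ * ((n:ℝ)+1)^l * r^n * ‖v‖ := by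
    intro n
    have h := JordanGrowthAux.key_growth (l := l) lam hlam (JordanGrowthAux.shiftN l)
      ((l:ℝ)+1) (by positivity) (JordanGrowthAux.norm_shiftN_le l)
      JordanGrowthAux.shiftN_pow_nil n v
    rw [← JordanGrowthAux.jordan_decomp] at h
    exact h
  set cE : ℝ := ‖lam⁻¹‖ * ((‖lam⁻¹‖ * ((l:ℝ)+1)) *
      (∑ k ∈ Finset.range l, (‖lam⁻¹‖ * ((l:ℝ)+1))^k)) with hcE
  have hcE0 : (0:ℝ) ≤ cE := by
    apply mul_nonneg (norm_nonneg _)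
    apply mul_nonneg (by positivity)
    exact Finset.sum_nonneg (fun k _ => by positivity)
  set C₂ : ℝ := ((l:ℝ)+1) * (max 1 cE)^l * (max 1 ‖lam⁻¹‖⁻¹)^l with hC₂
  have hC₂0 : (0:ℝ) < C₂ := by positivity
  have hBpow : ∀ (n : ℕ) (w : Fin (l+1) → ℂ), ‖(B^n).mulVec w‖ ≤ C₂ * ((n:ℝ)+1)^l * ‖lam⁻¹‖^n * ‖w‖ := by
    intro n w
    have h := JordanGrowthAux.key_growth (l := l) lam⁻¹ (inv_ne_zero hlam) E cE hcE0 hEb hEnil n w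
    rw [← hBdec] at h
    exact h
  have hBApow : ∀ n : ℕ, B^n * (jordanBlock l lam)^n = 1 := by
    intro n
    have hc : Commute B (jordanBlock l lam) := by
      show B * jordanBlock l lam = jordanBlock l lam * B
      rw [hBA, hAB]
    rw [← hc.mul_pow, hBA, one_pow]
  have hlow : ∀ n : ℕ, (‖v‖ / (C₂ * ((n:ℝ)+1)^l)) * r^n
      ≤ ‖((jordanBlock l lam)^n).mulVec v‖ := by
    intro n
    have hvn : v = (B^n).mulVec (((jordanBlock l lam)^n).mulVec v) := by
      rw [Matrix.mulVec_mulVec, hBApow n, Matrix.one_mulVec]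
    have h := hBpow n (((jordanBlock l lam)^n).mulVec v)
    rw [← hvn, norm_inv, ← hrdef] at h
    rw [div_mul_eq_mul_div, div_le_iff₀ (by positivity)]
    have hrn : (r⁻¹)^n * r^n = 1 := by rw [← mul_pow, inv_mul_cancel₀ hr0.ne', one_pow]
    calc ‖v‖ * r^n
        ≤ (C₂ * ((n:ℝ)+1)^l * (r⁻¹)^n * ‖((jordanBlock l lam)^n).mulVec v‖) * r^n :=
          mul_le_mul_of_nonneg_right h (by positivity)
      _ = (‖((jordanBlock l lam)^n).mulVec v‖ * (C₂ * ((n:ℝ)+1)^l)) * ((r⁻¹)^n * r^n) := by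
          ring
      _ = ‖((jordanBlock l lam)^n).mulVec v‖ * (C₂ * ((n:ℝ)+1)^l) := by rw [hrn, mul_one]
  show Filter.Tendsto _ Filter.atTop (nhds r)
  have hUtend : Filter.Tendsto
      (fun n : ℕ => (C₁ * ‖v‖ * ((n:ℝ)+1)^((l:ℕ):ℝ))^((n:ℝ)⁻¹) * r)
      Filter.atTop (nhds r) := by
    have h := (JordanGrowthAux.tendsto_aux (C₁ * ‖v‖) (by positivity) ((l:ℕ):ℝ)).mul_const r
    rw [one_mul] at h
    exact h
  have hLtend : Filter.Tendsto
      (fun n : ℕ => (‖v‖ / C₂ * ((n:ℝ)+1)^(-((l:ℕ):ℝ)))^((n:ℝ)⁻¹) * r)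
      Filter.atTop (nhds r) := by
    have h := (JordanGrowthAux.tendsto_aux (‖v‖ / C₂) (by positivity) (-((l:ℕ):ℝ))).mul_const r
    rw [one_mul] at h
    exact h
  apply tendsto_of_tendsto_of_tendsto_of_le_of_le' hLtend hUtend
  · filter_upwards [Filter.eventually_ge_atTop 1] with n hn
    have hn0 : (n:ℝ) ≠ 0 := Nat.cast_ne_zero.mpr (by omega)
    have hp1 : (0:ℝ) < (n:ℝ)+1 := by positivity
    have hsplit : ∀ a : ℝ, 0 ≤ a → (a * r^n)^((n:ℝ)⁻¹) = a^((n:ℝ)⁻¹) * r := by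
      intro a ha
      rw [Real.mul_rpow ha (by positivity), ← Real.rpow_natCast r n,
        ← Real.rpow_mul hr0.le, mul_inv_cancel₀ hn0, Real.rpow_one]
    have hbase : (‖v‖ / C₂ * ((n:ℝ)+1)^(-((l:ℕ):ℝ))) * r^n
        ≤ ‖((jordanBlock l lam)^n).mulVec v‖ := by
      have he : ‖v‖ / C₂ * ((n:ℝ)+1)^(-((l:ℕ):ℝ)) = ‖v‖ / (C₂ * ((n:ℝ)+1)^l) := by
        rw [Real.rpow_neg hp1.le, Real.rpow_natCast]
        field_simp
      rw [he]
      exact hlow n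
    calc (‖v‖ / C₂ * ((n:ℝ)+1)^(-((l:ℕ):ℝ)))^((n:ℝ)⁻¹) * r
        = ((‖v‖ / C₂ * ((n:ℝ)+1)^(-((l:ℕ):ℝ))) * r^n)^((n:ℝ)⁻¹) :=
          (hsplit _ (by positivity)).symm
      _ ≤ ‖((jordanBlock l lam)^n).mulVec v‖ ^ ((n:ℝ)⁻¹) :=
          Real.rpow_le_rpow (by positivity) hbase (by positivity)
  · filter_upwards [Filter.eventually_ge_atTop 1] with n hn
    have hn0 : (n:ℝ) ≠ 0 := Nat.cast_ne_zero.mpr (by omega)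
    have hp1 : (0:ℝ) < (n:ℝ)+1 := by positivity
    have hsplit : ∀ a : ℝ, 0 ≤ a → (a * r^n)^((n:ℝ)⁻¹) = a^((n:ℝ)⁻¹) * r := by
      intro a ha
      rw [Real.mul_rpow ha (by positivity), ← Real.rpow_natCast r n,
        ← Real.rpow_mul hr0.le, mul_inv_cancel₀ hn0, Real.rpow_one]
    have hbase : ‖((jordanBlock l lam)^n).mulVec v‖
        ≤ (C₁ * ‖v‖ * ((n:ℝ)+1)^((l:ℕ):ℝ)) * r^n := by
      have he : (C₁ * ‖v‖ * ((n:ℝ)+1)^((l:ℕ):ℝ)) * r^n = C₁ * ((n:ℝ)+1)^l * r^n * ‖v‖ := by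
        rw [Real.rpow_natCast]; ring
      rw [he]
      exact hupper n
    calc ‖((jordanBlock l lam)^n).mulVec v‖ ^ ((n:ℝ)⁻¹)
        ≤ ((C₁ * ‖v‖ * ((n:ℝ)+1)^((l:ℕ):ℝ)) * r^n)^((n:ℝ)⁻¹) :=
          Real.rpow_le_rpow (norm_nonneg _) hbase (by positivity)
      _ = (C₁ * ‖v‖ * ((n:ℝ)+1)^((l:ℕ):ℝ))^((n:ℝ)⁻¹) * r :=
          hsplit _ (by positivity)
end

section
/- Let λ ∈ ℂ with |λ| ∉ {0, 1}, let S be a set with a bijection R : S → S, and let Λ be the (l+1)×(l+1) Jordan block of eigenvalue λ. Suppose h : S → ℂ^{l+1} satisfies ‖h ∘ R − Λ^{−1} h‖ = O(1) (i.e., is uniformly bounded on S). Then there exists a unique function ĥ : S → ℂ^{l+1} such that ĥ ∘ R = Λ^{−1} ĥ and ĥ − h is uniformly bounded on S. -/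
open Matrix Filter

attribute [local instance] Matrix.linftyOpSeminormedAddCommGroup
attribute [local instance] Matrix.linftyOpNormedRing
attribute [local instance] Matrix.linftyOpNormedAlgebra

/-- The nilpotent shift matrix. -/
private def shiftM (l : ℕ) : Matrix (Fin (l + 1)) (Fin (l + 1)) ℂ :=
  fun i j => if (i : ℕ) = (j : ℕ) + 1 then 1 else 0

private lemma shiftM_pow (l k : ℕ) (i j : Fin (l + 1)) :
    ((shiftM l) ^ k) i j = if (i : ℕ) = (j : ℕ) + k then 1 else 0 := by
  induction k generalizing j with
  | zero => simp [Matrix.one_apply, Fin.ext_iff]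
  | succ k ih =>
    rw [pow_succ, Matrix.mul_apply]
    by_cases hj : (j : ℕ) + 1 < l + 1
    · rw [Finset.sum_eq_single (⟨(j : ℕ) + 1, hj⟩ : Fin (l + 1))]
      · simp only [ih, shiftM]
        norm_num
        have he : (j : ℕ) + 1 + k = (j : ℕ) + (k + 1) := by omega
        rw [he]
      · intro b _ hb
        have : (b : ℕ) ≠ (j : ℕ) + 1 := by
          intro hc; apply hb; apply Fin.ext; simpa using hc
        simp [shiftM, this]
      · simp
    · have hji : ∀ m : Fin (l + 1), (m : ℕ) ≠ (j : ℕ) + 1 := by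
        intro m; have := m.isLt; omega
      have hi : (i : ℕ) ≠ (j : ℕ) + (k + 1) := by
        have := i.isLt; omega
      simp [shiftM, hji, hi]

private lemma shiftM_pow_eq_zero (l : ℕ) : (shiftM l) ^ (l + 1) = 0 := by
  ext i j
  rw [shiftM_pow]
  have := i.isLt
  simp only [Matrix.zero_apply, ite_eq_right_iff]
  intro hc; omega

/-- summability of choose * geometric -/
private lemma summable_choose_geo {r : ℝ} (hr0 : 0 < r) (hr1 : r < 1) (k : ℕ) :
    Summable (fun n : ℕ => (n.choose k : ℝ) * r ^ (n - k)) := by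
  rw [← summable_nat_add_iff k]
  have h1 : Summable (fun n : ℕ => ((n : ℝ) ^ k * r ^ n)) := by
    have : ‖r‖ < 1 := by rw [Real.norm_eq_abs, abs_of_pos hr0]; exact hr1
    exact summable_pow_mul_geometric_of_norm_lt_one k this
  have h2 : Summable (fun n : ℕ => (((n + k : ℕ) : ℝ) ^ k * r ^ (n + k))) :=
    (summable_nat_add_iff k).2 h1
  have h3 : Summable (fun n : ℕ => (r ^ k)⁻¹ * ((((n + k : ℕ)) : ℝ) ^ k * r ^ (n + k))) :=
    h2.mul_left _
  apply Summable.of_nonneg_of_le _ _ h3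
  · intro n; positivity
  · intro n
    have hch : ((n + k).choose k : ℝ) ≤ (((n + k : ℕ) : ℝ)) ^ k := by
      exact_mod_cast Nat.cast_le.mpr ((n + k).choose_le_pow k) |>.trans_eq (by push_cast; ring)
    have hre : (n + k) - k = n := by omega
    rw [hre]
    calc ((n + k).choose k : ℝ) * r ^ n ≤ ((n + k : ℕ) : ℝ) ^ k * r ^ n := by
          apply mul_le_mul_of_nonneg_right hch (by positivity)
      _ = (r ^ k)⁻¹ * (((n + k : ℕ) : ℝ) ^ k * r ^ (n + k)) := by
          rw [pow_add]; field_simp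

/-- Lemma A: summability of powers of scalar + nilpotent. -/
private lemma summable_norm_pow {l : ℕ} (mu : ℂ) (hmu0 : mu ≠ 0) (hmu : ‖mu‖ < 1)
    (N : Matrix (Fin (l + 1)) (Fin (l + 1)) ℂ) (hN : N ^ (l + 1) = 0) :
    Summable (fun n : ℕ => ‖(mu • (1 : Matrix (Fin (l + 1)) (Fin (l + 1)) ℂ) + N) ^ n‖) := by
  set r : ℝ := ‖mu‖ with hr
  have hr0 : 0 < r := by simpa [hr] using norm_pos_iff.mpr hmu0
  set b : ℝ := ‖N‖ with hb
  -- the dominating series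
  set g : ℕ → ℝ := fun n => ∑ k ∈ Finset.range (l + 1),
    (n.choose k : ℝ) * r ^ (n - k) * b ^ k with hg
  have hgsum : Summable g := by
    exact summable_sum fun k _ => (summable_choose_geo hr0 hmu k).mul_right _
  apply Summable.of_nonneg_of_le (fun n => norm_nonneg _) _ hgsum
  intro n
  -- binomial expansion
  have hcomm : Commute N (mu • (1 : Matrix (Fin (l + 1)) (Fin (l + 1)) ℂ)) :=
    (Commute.one_right N).smul_right mu
  have hexp : (mu • (1 : Matrix (Fin (l + 1)) (Fin (l + 1)) ℂ) + N) ^ n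
      = ∑ k ∈ Finset.range (n + 1), (n.choose k) • (mu ^ (n - k) • N ^ k) := by
    have hac : mu • (1 : Matrix (Fin (l + 1)) (Fin (l + 1)) ℂ) + N
        = N + mu • (1 : Matrix (Fin (l + 1)) (Fin (l + 1)) ℂ) := add_comm _ _
    rw [hac, hcomm.add_pow]
    apply Finset.sum_congr rfl
    intro k _
    rw [smul_pow, one_pow, mul_smul_comm, mul_one,
      ← (Nat.cast_commute (n.choose k) (mu ^ (n - k) • N ^ k)).eq, ← nsmul_eq_mul]
  rw [hexp]
  -- pointwise term bound with exact power norm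
  set s : ℕ → ℝ := fun k => (n.choose k : ℝ) * r ^ (n - k) * ‖N ^ k‖ with hs
  have hsnn : ∀ k, 0 ≤ s k := by intro k; positivity
  have hterm : ∀ k, ‖(n.choose k) • (mu ^ (n - k) • N ^ k)‖ ≤ s k := by
    intro k
    calc ‖(n.choose k) • (mu ^ (n - k) • N ^ k)‖
        ≤ (n.choose k : ℝ) * ‖mu ^ (n - k) • N ^ k‖ := norm_nsmul_le
      _ = (n.choose k : ℝ) * (r ^ (n - k) * ‖N ^ k‖) := by
          rw [norm_smul, norm_pow]
      _ = s k := by rw [hs]; ring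
  calc ‖∑ k ∈ Finset.range (n + 1), (n.choose k) • (mu ^ (n - k) • N ^ k)‖
      ≤ ∑ k ∈ Finset.range (n + 1), ‖(n.choose k) • (mu ^ (n - k) • N ^ k)‖ :=
        norm_sum_le _ _
    _ ≤ ∑ k ∈ Finset.range (n + 1), s k := Finset.sum_le_sum fun k _ => hterm k
    _ = ∑ k ∈ (Finset.range (n + 1)) ∩ (Finset.range (l + 1)), s k := by
        symm
        apply Finset.sum_subset Finset.inter_subset_left
        intro k hk hk2
        have hnr : k ∉ Finset.range (l + 1) := fun hc => hk2 (Finset.mem_inter.mpr ⟨hk, hc⟩)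
        have hkl : l + 1 ≤ k := Nat.le_of_not_lt fun hc => hnr (Finset.mem_range.mpr hc)
        have hNk : N ^ k = 0 := pow_eq_zero_of_le hkl hN
        simp [hs, hNk]
    _ ≤ ∑ k ∈ Finset.range (l + 1), s k :=
        Finset.sum_le_sum_of_subset_of_nonneg Finset.inter_subset_right
          (fun k _ _ => hsnn k)
    _ ≤ g n := by
        apply Finset.sum_le_sum
        intro k _
        exact mul_le_mul_of_nonneg_left (norm_pow_le N k) (by positivity)

section construct

variable {l : ℕ} {S : Type*}

/-- Lemma B: construction of the canonical solution. -/
private lemma construct (M : Matrix (Fin (l + 1)) (Fin (l + 1)) ℂ)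
    (hM : Summable fun n : ℕ => ‖M ^ n‖) (T : S → S) (h : S → Fin (l + 1) → ℂ)
    (C₀ : ℝ) (hC : ∀ x, ‖M.mulVec (h (T x)) - h x‖ ≤ C₀) :
    ∃ g : S → Fin (l + 1) → ℂ,
      (∀ x, g x = M.mulVec (g (T x))) ∧ ∃ C : ℝ, ∀ x, ‖g x - h x‖ ≤ C := by
  classical
  set C₁ : ℝ := max C₀ 0 with hC₁
  have hC' : ∀ x, ‖M.mulVec (h (T x)) - h x‖ ≤ C₁ := fun x => (hC x).trans (le_max_left _ _)
  set e : S → Fin (l + 1) → ℂ := fun x => M.mulVec (h (T x)) - h x with he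
  set f : S → ℕ → Fin (l + 1) → ℂ := fun x n => (M ^ n).mulVec (e (T^[n] x)) with hf
  have hfb : ∀ x n, ‖f x n‖ ≤ ‖M ^ n‖ * C₁ := by
    intro x n
    calc ‖(M ^ n).mulVec (e (T^[n] x))‖ ≤ ‖M ^ n‖ * ‖e (T^[n] x)‖ :=
          Matrix.linfty_opNorm_mulVec _ _
      _ ≤ ‖M ^ n‖ * C₁ := mul_le_mul_of_nonneg_left (hC' _) (norm_nonneg _)
  have hfs : ∀ x, Summable (f x) := by
    intro x
    apply Summable.of_norm
    exact Summable.of_nonneg_of_le (fun n => norm_nonneg _) (hfb x) (hM.mul_right C₁)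
  set g : S → Fin (l + 1) → ℂ := fun x => h x + ∑' n, f x n with hgdef
  refine ⟨g, ?_, ?_⟩
  · intro x
    -- M.mulVec commutes with the tsum via the continuous linear map
    set L : (Fin (l + 1) → ℂ) →L[ℂ] (Fin (l + 1) → ℂ) :=
      LinearMap.toContinuousLinearMap (Matrix.mulVecLin M) with hL
    have hLapp : ∀ v, L v = M.mulVec v := fun v => rfl
    have hmap : M.mulVec (∑' n, f (T x) n) = ∑' n, M.mulVec (f (T x) n) := by
      rw [← hLapp, L.map_tsum (hfs (T x))]
      simp only [hLapp]
    have hshift : ∀ n, M.mulVec (f (T x) n) = f x (n + 1) := by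
      intro n
      rw [hf]
      simp only []
      rw [Matrix.mulVec_mulVec, ← pow_succ', ← Function.iterate_succ_apply]
    have hzero : f x 0 = e x := by
      rw [hf]; simp
    calc g x = h x + ∑' n, f x n := rfl
      _ = h x + (f x 0 + ∑' n, f x (n + 1)) := by rw [Summable.tsum_eq_zero_add (hfs x)]
      _ = M.mulVec (h (T x)) + ∑' n, f x (n + 1) := by
          rw [hzero, he]; simp only []; abel
      _ = M.mulVec (h (T x)) + ∑' n, M.mulVec (f (T x) n) := by
          simp only [hshift]
      _ = M.mulVec (h (T x)) + M.mulVec (∑' n, f (T x) n) := by rw [hmap]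
      _ = M.mulVec (h (T x) + ∑' n, f (T x) n) := by rw [Matrix.mulVec_add]
      _ = M.mulVec (g (T x)) := rfl
  · refine ⟨∑' n, ‖M ^ n‖ * C₁, ?_⟩
    intro x
    have h1 : g x - h x = ∑' n, f x n := by rw [hgdef]; simp only []; abel
    rw [h1]
    have hnorm : Summable fun n => ‖f x n‖ :=
      Summable.of_nonneg_of_le (fun n => norm_nonneg _) (hfb x) (hM.mul_right C₁)
    calc ‖∑' n, f x n‖ ≤ ∑' n, ‖f x n‖ := norm_tsum_le_tsum_norm hnorm
      _ ≤ ∑' n, ‖M ^ n‖ * C₁ := Summable.tsum_le_tsum (hfb x) hnorm (hM.mul_right C₁)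

/-- Lemma C: uniqueness. -/
private lemma uniq (M : Matrix (Fin (l + 1)) (Fin (l + 1)) ℂ)
    (hM : Summable fun n : ℕ => ‖M ^ n‖) (T : S → S) (d : S → Fin (l + 1) → ℂ)
    (heq : ∀ x, d x = M.mulVec (d (T x))) (D : ℝ) (hD : ∀ x, ‖d x‖ ≤ D) :
    ∀ x, d x = 0 := by
  have key : ∀ n : ℕ, ∀ x, d x = (M ^ n).mulVec (d (T^[n] x)) := by
    intro n
    induction n with
    | zero => intro x; simp
    | succ n ih =>
      intro x
      rw [heq x, ih (T x), Matrix.mulVec_mulVec, ← pow_succ', Function.iterate_succ_apply]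
  intro x
  have hb : ∀ n : ℕ, ‖d x‖ ≤ ‖M ^ n‖ * D := by
    intro n
    rw [key n x]
    calc ‖(M ^ n).mulVec (d (T^[n] x))‖ ≤ ‖M ^ n‖ * ‖d (T^[n] x)‖ :=
          Matrix.linfty_opNorm_mulVec _ _
      _ ≤ ‖M ^ n‖ * D := mul_le_mul_of_nonneg_left (hD _) (norm_nonneg _)
  have ht : Tendsto (fun n : ℕ => ‖M ^ n‖ * D) atTop (nhds 0) := by
    simpa using (hM.tendsto_atTop_zero).mul_const D
  have : ‖d x‖ ≤ 0 := ge_of_tendsto' ht hb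
  simpa using norm_le_zero_iff.mp this

end construct

/-- Axiomatic canonical heights for Jordan blocks: existence and uniqueness. -/
theorem canonical_height_exists_unique (l : ℕ) (lam : ℂ)
    (h0 : ‖lam‖ ≠ 0) (h1 : ‖lam‖ ≠ 1)
    {S : Type*} (R : S → S) (hR : Function.Bijective R)
    (h : S → Fin (l + 1) → ℂ)
    (hbdd : ∃ C : ℝ, ∀ x : S, ‖h (R x) - ((jordanBlock l lam)⁻¹).mulVec (h x)‖ ≤ C) :
    ∃! hhat : S → Fin (l + 1) → ℂ,
      (∀ x : S, hhat (R x) = ((jordanBlock l lam)⁻¹).mulVec (hhat x)) ∧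
      (∃ C : ℝ, ∀ x : S, ‖hhat x - h x‖ ≤ C) := by
  classical
  rcases isEmpty_or_nonempty S with he | hne
  · exact ⟨h, ⟨fun x => (he.false x).elim, 0, fun x => (he.false x).elim⟩,
      fun g' _ => funext fun x => (he.false x).elim⟩
  obtain ⟨C, hC⟩ := hbdd
  have hlam0 : lam ≠ 0 := fun hc => h0 (by simp [hc])
  set Λ : Matrix (Fin (l + 1)) (Fin (l + 1)) ℂ := jordanBlock l lam with hΛdef
  set N : Matrix (Fin (l + 1)) (Fin (l + 1)) ℂ := shiftM l with hNdef
  have hΛ : Λ = lam • (1 : Matrix (Fin (l + 1)) (Fin (l + 1)) ℂ) + N := by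
    ext i j
    simp only [hΛdef, hNdef, jordanBlock, shiftM, Matrix.add_apply, Matrix.smul_apply,
      Matrix.one_apply, Fin.ext_iff, smul_eq_mul]
    split_ifs <;> simp_all
  have htri : Λ.BlockTriangular OrderDual.toDual := by
    intro i j hij
    have hij' : i < j := hij
    have h1 : (i : ℕ) ≠ (j : ℕ) := by
      have := Fin.lt_iff_val_lt_val.mp hij'; omega
    have h2 : (i : ℕ) ≠ (j : ℕ) + 1 := by
      have := Fin.lt_iff_val_lt_val.mp hij'; omega
    simp [hΛdef, jordanBlock, h1, h2]
  have hdet : Λ.det = lam ^ (l + 1) := by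
    rw [Matrix.det_of_lowerTriangular _ htri]
    have : ∀ i : Fin (l + 1), Λ i i = lam := by
      intro i; simp [hΛdef, jordanBlock]
    simp only [this]
    simp [Finset.prod_const]
  have hU : IsUnit Λ.det := by
    rw [hdet]; exact (pow_ne_zero _ hlam0).isUnit
  set A : Matrix (Fin (l + 1)) (Fin (l + 1)) ℂ := Λ⁻¹ with hAdef
  have hMul : Λ * A = 1 := Matrix.mul_nonsing_inv _ hU
  have hMul' : A * Λ = 1 := Matrix.nonsing_inv_mul _ hU
  have hΛA : ∀ v : Fin (l + 1) → ℂ, Λ.mulVec (A.mulVec v) = v := by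
    intro v; rw [Matrix.mulVec_mulVec, hMul, Matrix.one_mulVec]
  have hAΛ : ∀ v : Fin (l + 1) → ℂ, A.mulVec (Λ.mulVec v) = v := by
    intro v; rw [Matrix.mulVec_mulVec, hMul', Matrix.one_mulVec]
  rcases lt_or_gt_of_ne h1 with hlt | hgt
  · -- |lam| < 1 : iterate forward with M = Λ
    have hsum : Summable fun n : ℕ => ‖Λ ^ n‖ := by
      have := summable_norm_pow lam hlam0 (by exact hlt) N
        (shiftM_pow_eq_zero l)
      rwa [← hΛ] at this
    obtain ⟨g, hg1, Cg, hg2⟩ := construct Λ hsum R h (‖Λ‖ * C) (by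
      intro x
      calc ‖Λ.mulVec (h (R x)) - h x‖
          = ‖Λ.mulVec (h (R x) - A.mulVec (h x))‖ := by
            rw [Matrix.mulVec_sub, hΛA]
        _ ≤ ‖Λ‖ * ‖h (R x) - A.mulVec (h x)‖ := Matrix.linfty_opNorm_mulVec _ _
        _ ≤ ‖Λ‖ * C := mul_le_mul_of_nonneg_left (hC x) (norm_nonneg _))
    refine ⟨g, ⟨?_, Cg, hg2⟩, ?_⟩
    · intro x
      calc g (R x) = A.mulVec (Λ.mulVec (g (R x))) := (hAΛ _).symm
        _ = A.mulVec (g x) := by rw [← hg1 x]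
    · rintro g' ⟨hg'1, Cg', hg'2⟩
      have hd : ∀ x, g' x - g x = Λ.mulVec (g' (R x) - g (R x)) := by
        intro x
        rw [Matrix.mulVec_sub]
        have h1' : Λ.mulVec (g' (R x)) = g' x := by rw [hg'1 x, hΛA]
        have h2' : Λ.mulVec (g (R x)) = g x := (hg1 x).symm
        rw [h1', h2']
      have hdb : ∀ x, ‖g' x - g x‖ ≤ Cg' + Cg := by
        intro x
        calc ‖g' x - g x‖ = ‖(g' x - h x) - (g x - h x)‖ := by congr 1; abel
          _ ≤ ‖g' x - h x‖ + ‖g x - h x‖ := norm_sub_le _ _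
          _ ≤ Cg' + Cg := add_le_add (hg'2 x) (hg2 x)
      have hz := uniq Λ hsum R (fun x => g' x - g x) hd (Cg' + Cg) hdb
      funext x
      exact sub_eq_zero.mp (hz x)
  · -- |lam| > 1 : iterate backward with M = A
    have hAN : A * N = 1 - lam • A := by
      have hthis := hMul'
      rw [hΛ, mul_add, mul_smul_comm, mul_one] at hthis
      exact eq_sub_of_add_eq' hthis
    have hNA : N * A = 1 - lam • A := by
      have hthis := hMul
      rw [hΛ, add_mul, smul_mul_assoc, one_mul] at hthis
      exact eq_sub_of_add_eq' hthis
    set N' : Matrix (Fin (l + 1)) (Fin (l + 1)) ℂ := (-lam⁻¹) • (A * N) with hN'def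
    have hA : A = lam⁻¹ • (1 : Matrix (Fin (l + 1)) (Fin (l + 1)) ℂ) + N' := by
      rw [hN'def, hAN, smul_sub, smul_smul, neg_mul, inv_mul_cancel₀ hlam0]
      simp only [neg_smul, one_smul, sub_neg_eq_add]
      abel
    have hN'nil : N' ^ (l + 1) = 0 := by
      have hcommAN : Commute A N := by
        unfold Commute SemiconjBy
        rw [hAN, hNA]
      rw [hN'def, smul_pow, hcommAN.mul_pow, hNdef, shiftM_pow_eq_zero, mul_zero, smul_zero]
    have hsum : Summable fun n : ℕ => ‖A ^ n‖ := by
      have hinv1 : ‖lam⁻¹‖ < 1 := by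
        rw [norm_inv]
        exact inv_lt_one_of_one_lt₀ hgt
      have := summable_norm_pow lam⁻¹ (inv_ne_zero hlam0) hinv1 N' hN'nil
      rwa [← hA] at this
    set T : S → S := Function.invFun R with hTdef
    have hTR : ∀ x, R (T x) = x := fun x => Function.rightInverse_invFun hR.2 x
    have hRT : ∀ x, T (R x) = x := fun x => Function.leftInverse_invFun hR.1 x
    obtain ⟨g, hg1, Cg, hg2⟩ := construct A hsum T h C (by
      intro x
      have hx := hC (T x)
      rw [hTR x] at hx
      rwa [norm_sub_rev])
    refine ⟨g, ⟨?_, Cg, hg2⟩, ?_⟩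
    · intro x
      have := hg1 (R x)
      rwa [hRT x] at this
    · rintro g' ⟨hg'1, Cg', hg'2⟩
      have hd : ∀ x, g' x - g x = A.mulVec (g' (T x) - g (T x)) := by
        intro x
        rw [Matrix.mulVec_sub]
        have h1' : A.mulVec (g' (T x)) = g' x := by
          have := hg'1 (T x); rw [hTR x] at this; exact this.symm
        have h2' : A.mulVec (g (T x)) = g x := (hg1 x).symm
        rw [h1', h2']
      have hdb : ∀ x, ‖g' x - g x‖ ≤ Cg' + Cg := by
        intro x
        calc ‖g' x - g x‖ = ‖(g' x - h x) - (g x - h x)‖ := by congr 1; abel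
          _ ≤ ‖g' x - h x‖ + ‖g x - h x‖ := norm_sub_le _ _
          _ ≤ Cg' + Cg := add_le_add (hg'2 x) (hg2 x)
      have hz := uniq A hsum T (fun x => g' x - g x) hd (Cg' + Cg) hdb
      funext x
      exact sub_eq_zero.mp (hz x)
end

section
/- Let λ ∈ ℂ with 0 < |λ| < 1, let S be a set with a bijection R : S → S, and let Λ be the (l+1)×(l+1) Jordan block of eigenvalue λ. If g : S → ℂ^{l+1} is a bounded function satisfying g ∘ R = Λ^{−1} g, then g is identically zero. -/
lemma jordanBlock_det (l : ℕ) (lam : ℂ) : (jordanBlock l lam).det = lam ^ (l + 1) := by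
  rw [Matrix.det_of_lowerTriangular (jordanBlock l lam)]
  · simp [jordanBlock]
  · intro i j hij
    have h : (i : ℕ) < (j : ℕ) := hij
    simp only [jordanBlock]
    rw [if_neg (by omega), if_neg (by omega)]

/-- Scalar contraction lemma. -/
lemma scalar_zero {S : Type*} (R : S → S) (lam : ℂ) (h1 : ‖lam‖ < 1)
    (φ : S → ℂ) (C : ℝ) (hb : ∀ x, ‖φ x‖ ≤ C)
    (hfe : ∀ x, φ x = lam * φ (R x)) : ∀ x, φ x = 0 := by
  intro x
  have key : ∀ n : ℕ, φ x = lam ^ n * φ (R^[n] x) := by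
    intro n
    induction n generalizing x with
    | zero => simp
    | succ n ih =>
      rw [hfe x, ih (R x), Function.iterate_succ_apply, pow_succ]
      ring
  have hle : ∀ n : ℕ, ‖φ x‖ ≤ ‖lam‖ ^ n * C := by
    intro n
    calc ‖φ x‖ = ‖lam‖ ^ n * ‖φ (R^[n] x)‖ := by
          rw [key n]; simp [map_mul, map_pow]
      _ ≤ ‖lam‖ ^ n * C := by
          apply mul_le_mul_of_nonneg_left (hb _) (by positivity)
  have htend : Filter.Tendsto (fun n : ℕ => ‖lam‖ ^ n * C) Filter.atTop (nhds 0) := by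
    have := tendsto_pow_atTop_nhds_zero_of_lt_one (norm_nonneg lam) h1
    simpa using this.mul_const C
  have : ‖φ x‖ ≤ 0 := ge_of_tendsto htend (Filter.Eventually.of_forall hle)
  have : ‖φ x‖ = 0 := le_antisymm this (norm_nonneg _)
  exact norm_eq_zero.mp this

/-- Uniqueness part of the canonical height construction: a bounded solution of the
functional equation is identically zero. -/
theorem bounded_solution_eq_zero (l : ℕ) (lam : ℂ)
    (h0 : 0 < ‖lam‖) (h1 : ‖lam‖ < 1)
    {S : Type*} (R : S → S) (hR : Function.Bijective R)
    (g : S → Fin (l + 1) → ℂ)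
    (hbdd : ∃ C : ℝ, ∀ x : S, ‖g x‖ ≤ C)
    (hfe : ∀ x : S, g (R x) = ((jordanBlock l lam)⁻¹).mulVec (g x)) :
    ∀ x : S, g x = 0 := by
  obtain ⟨C, hC⟩ := hbdd
  have hlam : lam ≠ 0 := by
    intro h; rw [h] at h0; simp at h0
  have hdet : IsUnit (jordanBlock l lam).det := by
    rw [jordanBlock_det]
    exact isUnit_iff_ne_zero.mpr (pow_ne_zero _ hlam)
  have hmul : ∀ x : S, (jordanBlock l lam).mulVec (g (R x)) = g x := by
    intro x
    rw [hfe x, Matrix.mulVec_mulVec, Matrix.mul_nonsing_inv _ hdet, Matrix.one_mulVec]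
  -- strong induction on the component
  have main : ∀ m : ℕ, ∀ i : Fin (l + 1), (i : ℕ) = m → ∀ x : S, g x i = 0 := by
    intro m
    induction m using Nat.strong_induction_on with
    | _ m ih =>
      intro i hi x
      -- component equation: g x i = lam * g (R x) i + (terms with smaller index)
      have comp : ∀ y : S, g y i = lam * g (R y) i := by
        intro y
        have := congrFun (hmul y) i
        rw [Matrix.mulVec, dotProduct] at this
        have hsum : ∑ j, jordanBlock l lam i j * g (R y) j = lam * g (R y) i := by
          have hterm : ∀ j : Fin (l + 1),
              jordanBlock l lam i j * g (R y) j
                = (if i = j then lam * g (R y) j else 0) := by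
            intro j
            by_cases hij : (i : ℕ) = (j : ℕ)
            · have : i = j := Fin.ext hij
              simp [jordanBlock, hij, this]
            · have hij2 : i ≠ j := fun h => hij (by rw [h])
              rw [if_neg hij2]
              simp only [jordanBlock, if_neg hij]
              by_cases hij3 : (i : ℕ) = (j : ℕ) + 1
              · rw [if_pos hij3]
                have hjlt : (j : ℕ) < m := by omega
                rw [ih (j : ℕ) (by omega) j rfl (R y)]
                ring
              · rw [if_neg hij3]; ring
          rw [Finset.sum_congr rfl (fun j _ => hterm j), Finset.sum_ite_eq _ i]
          simp
        rw [hsum] at this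
        exact this.symm
      exact scalar_zero R lam h1 (fun y => g y i) C
        (fun y => le_trans (norm_le_pi_norm (g y) i) (hC y)) comp x
  intro x
  funext i
  exact main (i : ℕ) i rfl x
end

section
/- Let Λ be the (l+1)×(l+1) Jordan block of eigenvalue λ with 0 < |λ| < 1, S a set with bijection R : S → S, h : S → ℂ^{l+1} with ‖h ∘ R − Λ^{−1} h‖ bounded, and ĥ the unique function with ĥ ∘ R = Λ^{−1} ĥ and ĥ − h bounded. Then for every x ∈ S, the sequence (h(R^{−n}(x)))_{n ≥ 0} is bounded; i.e., the values of h along the forward orbit of x under R^{−1} stay in a bounded set (with bound independent of x up to the uniform constant). -/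
lemma geom_bound (q c : ℝ) (hq0 : 0 ≤ q) (hq1 : q < 1) (hc : 0 ≤ c)
    (a : ℕ → ℝ) (ha : ∀ n, 0 ≤ a n) (hrec : ∀ n, a (n + 1) ≤ q * a n + c) :
    ∀ n, a n ≤ max (a 0) (c / (1 - q)) := by
  intro n
  set M := max (a 0) (c / (1 - q)) with hM
  induction n with
  | zero => exact le_max_left _ _
  | succ n ih =>
    have hq' : 0 < 1 - q := by linarith
    have hM0 : 0 ≤ M := le_trans (ha 0) (le_max_left _ _)
    have h2 : c ≤ (1 - q) * M := by
      have := le_max_right (a 0) (c / (1 - q))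
      rw [div_le_iff₀ hq'] at this
      linarith [this]
    have h1 : a (n + 1) ≤ q * M + c := by
      have := mul_le_mul_of_nonneg_left ih hq0
      linarith [hrec n]
    nlinarith

lemma jordan_det_ne (l : ℕ) (lam : ℂ) (h0 : lam ≠ 0) : IsUnit (jordanBlock l lam).det := by
  have htri : (jordanBlock l lam).BlockTriangular OrderDual.toDual := by
    intro i j hij
    simp only [OrderDual.toDual_lt_toDual] at hij
    have : (i : ℕ) < (j : ℕ) := hij
    simp only [jordanBlock]
    rw [if_neg (by omega), if_neg (by omega)]
  rw [Matrix.det_of_lowerTriangular _ htri]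
  simp only [jordanBlock, if_pos rfl]
  simp [Finset.prod_const, h0]

lemma jordan_mulVec_zero (l : ℕ) (lam : ℂ) (w : Fin (l + 1) → ℂ) :
    (jordanBlock l lam).mulVec w ⟨0, Nat.succ_pos l⟩ = lam * w ⟨0, Nat.succ_pos l⟩ := by
  classical
  have : ∀ j : Fin (l + 1), jordanBlock l lam ⟨0, Nat.succ_pos l⟩ j * w j =
      (if j = ⟨0, Nat.succ_pos l⟩ then lam * w j else 0) := by
    intro j
    rcases j with ⟨jv, hj⟩
    simp only [jordanBlock, Fin.mk.injEq]
    split_ifs <;> first | ring1 | (exfalso; (first | omega | tauto))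
  have hsum : (jordanBlock l lam).mulVec w ⟨0, Nat.succ_pos l⟩ =
      ∑ j, jordanBlock l lam ⟨0, Nat.succ_pos l⟩ j * w j := rfl
  rw [hsum, Finset.sum_congr rfl fun j _ => this j, Finset.sum_ite_eq']
  simp

lemma jordan_mulVec_succ (l : ℕ) (lam : ℂ) (w : Fin (l + 1) → ℂ) (k : ℕ) (hk : k + 1 < l + 1) :
    (jordanBlock l lam).mulVec w ⟨k + 1, hk⟩ =
      lam * w ⟨k + 1, hk⟩ + w ⟨k, by omega⟩ := by
  classical
  have : ∀ j : Fin (l + 1), jordanBlock l lam ⟨k + 1, hk⟩ j * w j =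
      (if j = ⟨k + 1, hk⟩ then lam * w j else 0) +
      (if j = ⟨k, by omega⟩ then w j else 0) := by
    intro j
    rcases j with ⟨jv, hj⟩
    simp only [jordanBlock, Fin.mk.injEq]
    split_ifs <;> first | ring1 | (exfalso; (first | omega | tauto))
  have hsum : (jordanBlock l lam).mulVec w ⟨k + 1, hk⟩ =
      ∑ j, jordanBlock l lam ⟨k + 1, hk⟩ j * w j := rfl
  rw [hsum, Finset.sum_congr rfl fun j _ => this j, Finset.sum_add_distrib,
    Finset.sum_ite_eq', Finset.sum_ite_eq']
  simp

/-- Boundedness of `h` along forward orbits of `R⁻¹` for contracting Jordan blocks. -/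
theorem height_bounded_on_orbit (l : ℕ) (lam : ℂ)
    (h0 : 0 < ‖lam‖) (h1 : ‖lam‖ < 1)
    {S : Type*} (R Rinv : S → S)
    (hRinv : ∀ x : S, R (Rinv x) = x ∧ Rinv (R x) = x)
    (h : S → Fin (l + 1) → ℂ)
    (hbdd : ∃ C : ℝ, ∀ x : S, ‖h (R x) - ((jordanBlock l lam)⁻¹).mulVec (h x)‖ ≤ C)
    (hhat : S → Fin (l + 1) → ℂ)
    (hfe : ∀ x : S, hhat (R x) = ((jordanBlock l lam)⁻¹).mulVec (hhat x))
    (hnorm : ∃ C : ℝ, ∀ x : S, ‖hhat x - h x‖ ≤ C) :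
    ∀ x : S, ∃ C : ℝ, ∀ n : ℕ, ‖h (Rinv^[n] x)‖ ≤ C := by
  intro x
  obtain ⟨C, hC⟩ := hnorm
  have hlam : lam ≠ 0 := by
    intro hl; rw [hl] at h0; simp at h0
  have hdet := jordan_det_ne l lam hlam
  set v : ℕ → Fin (l + 1) → ℂ := fun n => hhat (Rinv^[n] x) with hv
  -- recurrence
  have hrec : ∀ n, v (n + 1) = (jordanBlock l lam).mulVec (v n) := by
    intro n
    have h1' : v (n + 1) = hhat (Rinv (Rinv^[n] x)) := by
      rw [hv]; simp [Function.iterate_succ_apply']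
    set y := Rinv^[n] x
    have := hfe (Rinv y)
    rw [(hRinv y).1] at this
    have h2' : (jordanBlock l lam).mulVec (hhat y) = hhat (Rinv y) := by
      rw [this, Matrix.mulVec_mulVec, Matrix.mul_nonsing_inv _ hdet, Matrix.one_mulVec]
    rw [h1', ← h2']
  -- componentwise bounds
  have key : ∀ k : ℕ, ∃ B : ℝ, 0 ≤ B ∧
      ∀ n, ∀ i : Fin (l + 1), (i : ℕ) ≤ k → ‖v n i‖ ≤ B := by
    intro k
    induction k with
    | zero =>
      refine ⟨‖v 0 ⟨0, Nat.succ_pos l⟩‖, norm_nonneg _, ?_⟩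
      intro n i hi
      have hi0 : i = ⟨0, Nat.succ_pos l⟩ := by
        apply Fin.ext; simpa using hi
      subst hi0
      have : ∀ m, ‖v m ⟨0, Nat.succ_pos l⟩‖ ≤
          ‖v 0 ⟨0, Nat.succ_pos l⟩‖ := by
        intro m
        induction m with
        | zero => exact le_refl _
        | succ m ih =>
          have := hrec m
          have h3 : v (m + 1) ⟨0, Nat.succ_pos l⟩ = lam * v m ⟨0, Nat.succ_pos l⟩ := by
            rw [this, jordan_mulVec_zero]
          rw [h3, norm_mul]
          calc ‖lam‖ * ‖v m ⟨0, Nat.succ_pos l⟩‖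
              ≤ 1 * ‖v m ⟨0, Nat.succ_pos l⟩‖ :=
                mul_le_mul_of_nonneg_right h1.le (norm_nonneg _)
            _ = _ := one_mul _
            _ ≤ _ := ih
      exact this n
    | succ k ihk =>
      obtain ⟨B, hB0, hB⟩ := ihk
      by_cases hkl : k + 1 < l + 1
      · -- the coordinate i = k+1 exists
        set i : Fin (l + 1) := ⟨k + 1, hkl⟩ with hi
        set j : Fin (l + 1) := ⟨k, by omega⟩ with hj
        have hrec' : ∀ n, ‖v (n + 1) i‖ ≤
            ‖lam‖ * ‖v n i‖ + B := by
          intro n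
          have h3 : v (n + 1) i = lam * v n i + v n j := by
            rw [hrec n, hi, jordan_mulVec_succ]
          rw [h3]
          calc ‖lam * v n i + v n j‖
              ≤ ‖lam * v n i‖ + ‖v n j‖ := norm_add_le _ _
            _ ≤ ‖lam‖ * ‖v n i‖ + B := by
                rw [norm_mul]
                exact add_le_add_right (hB n j (by simp [hj])) _
        have hgeom := geom_bound (‖lam‖) B h0.le h1 hB0
          (fun n => ‖v n i‖) (fun n => norm_nonneg _) hrec'
        set M := max (‖v 0 i‖) (B / (1 - ‖lam‖)) with hMdef
        refine ⟨max B M, le_trans hB0 (le_max_left _ _), ?_⟩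
        intro n i' hi'
        by_cases hii : (i' : ℕ) ≤ k
        · exact le_trans (hB n i' hii) (le_max_left _ _)
        · have : i' = i := by apply Fin.ext; simp [hi]; omega
          subst this
          exact le_trans (hgeom n) (le_max_right _ _)
      · refine ⟨B, hB0, ?_⟩
        intro n i' hi'
        exact hB n i' (by omega)
  obtain ⟨B, hB0, hB⟩ := key l
  refine ⟨B + C, ?_⟩
  intro n
  have hvb : ‖v n‖ ≤ B := by
    rw [pi_norm_le_iff_of_nonneg hB0]
    intro i
    simpa using hB n i (by omega)
  calc ‖h (Rinv^[n] x)‖ = ‖v n - (v n - h (Rinv^[n] x))‖ := by congr 1; abel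
    _ ≤ ‖v n‖ + ‖v n - h (Rinv^[n] x)‖ := norm_sub_le _ _
    _ ≤ B + C := add_le_add hvb (hC _)
end

section
/- Let λ ∈ ℂ with |λ| > 1, Λ the (l+1)×(l+1) Jordan block of eigenvalue λ, and suppose (c_n)_{n≥0} is a sequence of vectors in ℂ^{l+1} satisfying c_{n+1} = Λ c_n + e_n where ‖e_n‖ ≤ C for all n. If c_0 ≠ 0 is such that the 'canonical limit' v := lim_{n→∞} Λ^{−n} c_n is nonzero, then lim_{n→∞} ‖c_n‖^{1/n} = |λ|. Moreover, the limit v = lim_{n→∞} Λ^{−n} c_n always exists. -/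
open Matrix Filter Finset

attribute [local instance] Matrix.linftyOpNormedRing Matrix.linftyOpNormedAlgebra

lemma nilp_apply (l : ℕ) (i j : Fin (l+1)) :
    jordanBlock l 0 i j = if (i : ℕ) = (j : ℕ) + 1 then 1 else 0 := by
  simp only [jordanBlock]
  split_ifs with h1 h2 <;> first | rfl | omega

lemma nilp_pow (l k : ℕ) (i j : Fin (l+1)) :
    ((jordanBlock l 0) ^ k) i j = if (i : ℕ) = (j : ℕ) + k then 1 else 0 := by
  induction k generalizing j with
  | zero => simp [Matrix.one_apply, Fin.ext_iff]
  | succ k ih =>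
    rw [pow_succ, Matrix.mul_apply]
    by_cases h : (j : ℕ) + 1 ≤ l
    · rw [Finset.sum_eq_single (⟨(j : ℕ) + 1, by omega⟩ : Fin (l+1))]
      · rw [ih, nilp_apply, if_pos rfl, mul_one]
        simp only [Fin.val_mk, show (j : ℕ) + 1 + k = (j : ℕ) + (k + 1) from by omega]
      · intro b _ hb
        rw [nilp_apply]
        have : (b : ℕ) ≠ (j : ℕ) + 1 := fun hc => hb (by apply Fin.ext; simpa using hc)
        rw [if_neg this, mul_zero]
      · simp
    · rw [Finset.sum_eq_zero, if_neg (by omega)]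
      intro b _
      rw [nilp_apply, if_neg (by omega), mul_zero]

lemma nilp_nilpotent (l : ℕ) : (jordanBlock l 0) ^ (l + 1) = 0 := by
  ext i j
  rw [nilp_pow, if_neg (by omega)]
  rfl

lemma my_pow_eq_zero_of_le {R : Type*} [MonoidWithZero R] {Q : R} {l k : ℕ}
    (hQ : Q ^ (l + 1) = 0) (hk : l + 1 ≤ k) : Q ^ k = 0 := by
  rw [← Nat.add_sub_cancel' hk, pow_add, hQ, zero_mul]

lemma one_add_pow_eq {R : Type*} [Ring R] (Q : R) (l : ℕ)
    (hQ : Q ^ (l + 1) = 0) (n : ℕ) :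
    (1 + Q) ^ n = ∑ j ∈ Finset.range (l + 1), (n.choose j) • Q ^ j := by
  rw [add_comm, (Commute.one_right Q).add_pow]
  have h1 : ∀ k ∈ Finset.range (n + l + 2),
      Q ^ k * 1 ^ (n - k) * (n.choose k : R) = (n.choose k) • Q ^ k := by
    intro k _
    rw [one_pow, mul_one, ← (Nat.cast_commute (n.choose k) (Q ^ k)).eq, nsmul_eq_mul]
  rw [Finset.sum_subset (Finset.range_subset_range.2 (by omega) :
        Finset.range (n + 1) ⊆ Finset.range (n + l + 2))
      (fun k _ hk => by
        rw [Nat.choose_eq_zero_of_lt (by simpa using hk), Nat.cast_zero, mul_zero])]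
  rw [Finset.sum_congr rfl h1]
  refine (Finset.sum_subset (Finset.range_subset_range.2 (by omega) :
      Finset.range (l + 1) ⊆ Finset.range (n + l + 2)) ?_).symm
  intro k _ hk
  rw [my_pow_eq_zero_of_le hQ (by simpa using hk), smul_zero]

lemma one_add_pow_norm_le {l : ℕ} (Q : Matrix (Fin (l + 1)) (Fin (l + 1)) ℂ)
    (hQ : Q ^ (l + 1) = 0) (n : ℕ) :
    ‖(1 + Q) ^ n‖ ≤ ((n : ℝ) + 1) ^ l * ∑ j ∈ Finset.range (l + 1), ‖Q ^ j‖ := by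
  rw [one_add_pow_eq Q l hQ n, Finset.mul_sum]
  refine (norm_sum_le _ _).trans (Finset.sum_le_sum fun j hj => ?_)
  refine (norm_nsmul_le).trans ?_
  apply mul_le_mul_of_nonneg_right _ (norm_nonneg _)
  have h1 : n.choose j ≤ (n + 1) ^ l := by
    calc n.choose j ≤ n ^ j := Nat.choose_le_pow n j
    _ ≤ (n + 1) ^ j := Nat.pow_le_pow_left (by omega) j
    _ ≤ (n + 1) ^ l := Nat.pow_le_pow_right (by omega) (by simpa using Finset.mem_range_succ_iff.mp hj)
  calc (n.choose j : ℝ) ≤ ((n + 1) ^ l : ℕ) := by exact_mod_cast h1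
  _ = ((n : ℝ) + 1) ^ l := by push_cast; ring

lemma tendsto_const_rpow_inv (a : ℝ) (ha : 0 < a) :
    Filter.Tendsto (fun n : ℕ => a ^ ((n : ℝ)⁻¹)) atTop (nhds 1) := by
  have h : Tendsto (fun n : ℕ => Real.log a * (n : ℝ)⁻¹) atTop (nhds 0) := by
    simpa using (tendsto_inv_atTop_nhds_zero_nat (𝕜 := ℝ)).const_mul (Real.log a)
  have h2 := (Real.continuous_exp.tendsto 0).comp h
  rw [Real.exp_zero] at h2
  exact h2.congr fun n => (Real.rpow_def_of_pos ha _).symm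

lemma tendsto_npow_rpow_inv (l : ℕ) :
    Filter.Tendsto (fun n : ℕ => (((n : ℝ) + 1) ^ l) ^ ((n : ℝ)⁻¹)) atTop (nhds 1) := by
  have h0 : Tendsto (fun x : ℝ => Real.log x / x) atTop (nhds 0) :=
    Real.isLittleO_log_id_atTop.tendsto_div_nhds_zero
  have h1 : Tendsto (fun n : ℕ => Real.log ((n : ℝ) + 1) / ((n : ℝ) + 1)) atTop (nhds 0) :=
    h0.comp (tendsto_atTop_add_const_right atTop 1 tendsto_natCast_atTop_atTop)
  have h2 : Tendsto (fun n : ℕ => ((n : ℝ) + 1) * (n : ℝ)⁻¹) atTop (nhds 1) := by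
    have hb : Tendsto (fun n : ℕ => 1 + (n : ℝ)⁻¹) atTop (nhds 1) := by
      simpa using tendsto_const_nhds.add (tendsto_inv_atTop_nhds_zero_nat (𝕜 := ℝ))
    refine Filter.Tendsto.congr' ?_ hb
    filter_upwards [eventually_ge_atTop 1] with n hn
    have hn' : (n : ℝ) ≠ 0 := Nat.cast_ne_zero.mpr (by omega)
    field_simp
  have hE : Tendsto (fun n : ℕ => ((l : ℝ) * Real.log ((n : ℝ) + 1)) * (n : ℝ)⁻¹)
      atTop (nhds 0) := by
    have h3 := (h1.const_mul (l : ℝ)).mul h2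
    rw [mul_zero, zero_mul] at h3
    refine h3.congr fun n => ?_
    have hn1 : ((n : ℝ) + 1) ≠ 0 := by positivity
    field_simp
  have h4 := (Real.continuous_exp.tendsto 0).comp hE
  rw [Real.exp_zero] at h4
  refine h4.congr fun n => ?_
  rw [Real.rpow_def_of_pos (by positivity), Real.log_pow]
  norm_num

lemma tendsto_upper_aux (b r : ℝ) (hb : 0 < b) (hr : 0 < r) (l : ℕ) :
    Filter.Tendsto (fun n : ℕ => (b * ((n : ℝ) + 1) ^ l * r ^ n) ^ ((n : ℝ)⁻¹))
      atTop (nhds r) := by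
  have h := ((tendsto_const_rpow_inv b hb).mul (tendsto_npow_rpow_inv l)).mul
    (tendsto_const_nhds (x := r) (f := atTop (α := ℕ)))
  rw [mul_one, one_mul] at h
  refine Filter.Tendsto.congr' ?_ h
  filter_upwards [eventually_ge_atTop 1] with n hn
  have hn0 : (n : ℝ) ≠ 0 := Nat.cast_ne_zero.mpr (by omega)
  rw [Real.mul_rpow (by positivity) (by positivity), Real.mul_rpow hb.le (by positivity),
    ← Real.rpow_natCast r n, ← Real.rpow_mul hr.le, mul_inv_cancel₀ hn0, Real.rpow_one]

lemma tendsto_lower_aux (a r : ℝ) (ha : 0 < a) (hr : 0 < r) (l : ℕ) :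
    Filter.Tendsto (fun n : ℕ => (a / ((n : ℝ) + 1) ^ l * r ^ n) ^ ((n : ℝ)⁻¹))
      atTop (nhds r) := by
  have h := (((tendsto_const_rpow_inv a ha).div (tendsto_npow_rpow_inv l) one_ne_zero).mul
    (tendsto_const_nhds (x := r) (f := atTop (α := ℕ))))
  rw [div_one, one_mul] at h
  refine Filter.Tendsto.congr' ?_ h
  filter_upwards [eventually_ge_atTop 1] with n hn
  have hn0 : (n : ℝ) ≠ 0 := Nat.cast_ne_zero.mpr (by omega)
  simp only [Pi.div_apply]
  rw [Real.mul_rpow (by positivity) (by positivity), Real.div_rpow ha.le (by positivity),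
    ← Real.rpow_natCast r n, ← Real.rpow_mul hr.le, mul_inv_cancel₀ hn0, Real.rpow_one]

set_option maxHeartbeats 1600000 in
/-- For an expanding Jordan block, an almost-invariant sequence has a canonical limit
`v = lim Λ⁻ⁿ cₙ`, and if this limit is nonzero (and `c₀ ≠ 0`), then `‖cₙ‖^{1/n} → |λ|`. -/
theorem expanding_jordan_growth (l : ℕ) (lam : ℂ) (hlam : 1 < ‖lam‖)
    (c e : ℕ → Fin (l + 1) → ℂ) (C : ℝ)
    (hrec : ∀ n : ℕ, c (n + 1) = (jordanBlock l lam).mulVec (c n) + e n)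
    (he : ∀ n : ℕ, ‖e n‖ ≤ C) :
    (∃ v : Fin (l + 1) → ℂ,
      Filter.Tendsto (fun n : ℕ => ((jordanBlock l lam)⁻¹ ^ n).mulVec (c n))
        Filter.atTop (nhds v)) ∧
    ∀ v : Fin (l + 1) → ℂ,
      Filter.Tendsto (fun n : ℕ => ((jordanBlock l lam)⁻¹ ^ n).mulVec (c n))
        Filter.atTop (nhds v) →
      c 0 ≠ 0 → v ≠ 0 →
      Filter.Tendsto (fun n : ℕ => ‖c n‖ ^ ((n : ℝ)⁻¹)) Filter.atTop
        (nhds ‖lam‖) := by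
  have hr1 : 1 < ‖lam‖ := hlam
  have hr0 : (0:ℝ) < ‖lam‖ := lt_trans one_pos hr1
  have hlam0 : lam ≠ 0 := by
    intro h
    rw [h] at hr1
    norm_num at hr1
  set Λ := jordanBlock l lam with hΛdef
  set N := jordanBlock l 0 with hNdef
  have hsplit : Λ = lam • (1 : Matrix (Fin (l+1)) (Fin (l+1)) ℂ) + N := by
    ext i j
    simp only [hΛdef, hNdef, jordanBlock, Matrix.add_apply, Matrix.smul_apply,
      Matrix.one_apply, smul_eq_mul, Fin.ext_iff]
    split_ifs <;> first | norm_num | omega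
  have hNnil : N ^ (l + 1) = 0 := nilp_nilpotent l
  have hdet : Λ.det ≠ 0 := by
    have htri : Λ.BlockTriangular OrderDual.toDual := by
      intro i j hij
      have h2 : (i : ℕ) < (j : ℕ) := OrderDual.toDual_lt_toDual.mp hij
      simp only [hΛdef, jordanBlock]
      rw [if_neg (by omega), if_neg (by omega)]
    rw [Matrix.det_of_lowerTriangular Λ htri]
    have hdiag : ∀ i : Fin (l+1), Λ i i = lam := fun i => by simp [hΛdef, jordanBlock]
    rw [Finset.prod_congr rfl (fun i _ => hdiag i), Finset.prod_const]
    exact pow_ne_zero _ hlam0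
  have hunit : IsUnit Λ.det := Ne.isUnit hdet
  have hmulinv : Λ * Λ⁻¹ = 1 := Matrix.mul_nonsing_inv Λ hunit
  have hinvmul : Λ⁻¹ * Λ = 1 := Matrix.nonsing_inv_mul Λ hunit
  have hcommΛN : Λ * N = N * Λ := by
    rw [hsplit, add_mul, mul_add, Matrix.smul_mul, Matrix.mul_smul, one_mul, mul_one]
  have hcommInvN : Λ⁻¹ * N = N * Λ⁻¹ := by
    calc Λ⁻¹ * N = Λ⁻¹ * N * (Λ * Λ⁻¹) := by rw [hmulinv, mul_one]
      _ = Λ⁻¹ * (N * Λ) * Λ⁻¹ := by rw [mul_assoc, mul_assoc, mul_assoc]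
      _ = Λ⁻¹ * (Λ * N) * Λ⁻¹ := by rw [hcommΛN]
      _ = (Λ⁻¹ * Λ) * (N * Λ⁻¹) := by rw [mul_assoc, mul_assoc, mul_assoc]
      _ = N * Λ⁻¹ := by rw [hinvmul, one_mul]
  set P := lam⁻¹ • N with hPdef
  have hP : P ^ (l + 1) = 0 := by rw [hPdef, smul_pow, hNnil, smul_zero]
  have hΛform : Λ = lam • (1 + P) := by
    rw [hsplit, hPdef, smul_add, smul_smul, mul_inv_cancel₀ hlam0, one_smul]
  set D₁ := ∑ j ∈ Finset.range (l + 1), ‖P ^ j‖ with hD₁def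
  have hD₁0 : 0 ≤ D₁ := Finset.sum_nonneg fun _ _ => norm_nonneg _
  have hD₁pos : 0 < D₁ := by
    have h1 : ‖P ^ 0‖ ≤ D₁ :=
      Finset.single_le_sum (f := fun j => ‖P ^ j‖) (fun j _ => norm_nonneg _)
        (Finset.mem_range.mpr (by omega))
    have h2 : (0:ℝ) < ‖P ^ 0‖ := by
      rw [pow_zero]
      exact norm_pos_iff.mpr one_ne_zero
    linarith
  have hnormΛ : ∀ n : ℕ, ‖Λ ^ n‖ ≤ ‖lam‖ ^ n * (((n : ℝ) + 1) ^ l * D₁) := by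
    intro n
    rw [hΛform, smul_pow, norm_smul, norm_pow]
    exact mul_le_mul_of_nonneg_left (one_add_pow_norm_le P hP n) (by positivity)
  have hN' : N = Λ - lam • (1 : Matrix (Fin (l+1)) (Fin (l+1)) ℂ) := by
    rw [hsplit, add_sub_cancel_left]
  set M := lam • Λ⁻¹ - 1 with hMdef
  have hMeq : M = -(Λ⁻¹ * N) := by
    rw [hMdef, hN', mul_sub, hinvmul, Matrix.mul_smul, mul_one, neg_sub]
  have hM : M ^ (l + 1) = 0 := by
    rw [hMeq, neg_pow, Commute.mul_pow hcommInvN, hNnil, mul_zero, mul_zero]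
  have hinvform : Λ⁻¹ = lam⁻¹ • (1 + M) := by
    rw [hMdef, add_sub_cancel, smul_smul, inv_mul_cancel₀ hlam0, one_smul]
  set D₂ := ∑ j ∈ Finset.range (l + 1), ‖M ^ j‖ with hD₂def
  have hD₂0 : 0 ≤ D₂ := Finset.sum_nonneg fun _ _ => norm_nonneg _
  have hD₂pos : 0 < D₂ := by
    have h1 : ‖M ^ 0‖ ≤ D₂ :=
      Finset.single_le_sum (f := fun j => ‖M ^ j‖) (fun j _ => norm_nonneg _)
        (Finset.mem_range.mpr (by omega))
    have h2 : (0:ℝ) < ‖M ^ 0‖ := by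
      rw [pow_zero]
      exact norm_pos_iff.mpr one_ne_zero
    linarith
  have hnormInv : ∀ n : ℕ, ‖Λ⁻¹ ^ n‖ ≤ (‖lam‖⁻¹) ^ n * (((n : ℝ) + 1) ^ l * D₂) := by
    intro n
    rw [hinvform, smul_pow, norm_smul, norm_pow, norm_inv]
    exact mul_le_mul_of_nonneg_left (one_add_pow_norm_le M hM n) (by positivity)
  set x : ℕ → (Fin (l + 1) → ℂ) := fun n => (Λ⁻¹ ^ n).mulVec (c n) with hxdef
  have hstep : ∀ n : ℕ, x (n + 1) = x n + (Λ⁻¹ ^ (n + 1)).mulVec (e n) := by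
    intro n
    have : x (n + 1) = (Λ⁻¹ ^ (n + 1)).mulVec (Λ.mulVec (c n) + e n) := by
      rw [hxdef]
      simp only []
      rw [hrec n]
    rw [this, Matrix.mulVec_add, Matrix.mulVec_mulVec]
    congr 1
    rw [pow_succ, mul_assoc, hinvmul, mul_one]
  have hdist : Summable (fun n : ℕ => dist (x n) (x (n + 1))) := by
    have hrrpos : (0:ℝ) < ‖lam‖⁻¹ := by positivity
    have hrrlt : ‖lam‖⁻¹ < 1 := by
      rw [inv_lt_one_iff₀]
      right
      exact hr1
    have hsum0 : Summable (fun n : ℕ => (n : ℝ) ^ l * (‖lam‖⁻¹) ^ n) := by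
      apply summable_pow_mul_geometric_of_norm_lt_one
      rw [Real.norm_eq_abs, abs_of_pos hrrpos]
      exact hrrlt
    have hsum1 : Summable (fun n : ℕ => ((n : ℝ) + 2) ^ l * (‖lam‖⁻¹) ^ (n + 2)) := by
      have h := (summable_nat_add_iff 2).mpr hsum0
      refine h.congr fun n => ?_
      push_cast
      ring
    have hsum2 : Summable (fun n : ℕ => ((n : ℝ) + 2) ^ l * (‖lam‖⁻¹) ^ (n + 1)) := by
      have h := hsum1.mul_left ‖lam‖
      refine h.congr fun n => ?_
      rw [pow_succ (‖lam‖⁻¹) (n + 1)]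
      field_simp
    refine Summable.of_nonneg_of_le (fun n => dist_nonneg) (fun n => ?_)
      (hsum2.mul_left (D₂ * C))
    rw [dist_eq_norm, hstep n, sub_add_cancel_left, norm_neg]
    calc ‖(Λ⁻¹ ^ (n + 1)).mulVec (e n)‖
        ≤ ‖Λ⁻¹ ^ (n + 1)‖ * ‖e n‖ := Matrix.linfty_opNorm_mulVec _ _
      _ ≤ ((‖lam‖⁻¹) ^ (n + 1) * ((((n : ℕ) + 1 : ℕ) + 1 : ℝ) ^ l * D₂)) * C := by
          apply mul_le_mul (by exact_mod_cast hnormInv (n + 1)) (he n) (norm_nonneg _)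
          have : (0:ℝ) ≤ ((((n : ℕ) + 1 : ℕ) + 1 : ℝ)) ^ l := by positivity
          exact mul_nonneg (by positivity) (mul_nonneg this hD₂0)
      _ = D₂ * C * (((n : ℝ) + 2) ^ l * (‖lam‖⁻¹) ^ (n + 1)) := by push_cast; ring
  have hcauchy : CauchySeq x := cauchySeq_of_summable_dist hdist
  obtain ⟨v, hv⟩ := cauchySeq_tendsto_of_complete hcauchy
  refine ⟨⟨v, hv⟩, ?_⟩
  intro w hw hc0 hw0
  obtain ⟨B, hB⟩ : ∃ B : ℝ, ∀ n, ‖x n‖ ≤ B := by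
    obtain ⟨B, hB⟩ := hw.norm.bddAbove_range
    exact ⟨B, fun n => hB (Set.mem_range_self n)⟩
  have hwpos : (0:ℝ) < ‖w‖ := norm_pos_iff.mpr hw0
  have hev : ∀ᶠ n in atTop, ‖w‖ / 2 < ‖x n‖ :=
    hw.norm.eventually_const_lt (half_lt_self hwpos)
  have hxc : ∀ n : ℕ, (Λ ^ n).mulVec (x n) = c n := by
    intro n
    rw [hxdef]
    simp only []
    rw [Matrix.mulVec_mulVec]
    have hcm : Commute Λ Λ⁻¹ := by
      show Λ * Λ⁻¹ = Λ⁻¹ * Λ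
      rw [hmulinv, hinvmul]
    rw [← hcm.mul_pow, hmulinv, one_pow, Matrix.one_mulVec]
  set b := D₁ * max B 1 with hbdef
  have hbpos : 0 < b := mul_pos hD₁pos (lt_of_lt_of_le one_pos (le_max_right B 1))
  set a := ‖w‖ / (2 * D₂) with hadef
  have hapos : 0 < a := div_pos hwpos (mul_pos two_pos hD₂pos)
  have hD₂ne : D₂ ≠ 0 := ne_of_gt hD₂pos
  have hupper : ∀ n : ℕ, ‖c n‖ ≤ b * ((n : ℝ) + 1) ^ l * ‖lam‖ ^ n := by
    intro n
    rw [← hxc n]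
    calc ‖(Λ ^ n).mulVec (x n)‖ ≤ ‖Λ ^ n‖ * ‖x n‖ := Matrix.linfty_opNorm_mulVec _ _
      _ ≤ (‖lam‖ ^ n * (((n : ℝ) + 1) ^ l * D₁)) * max B 1 := by
          apply mul_le_mul (hnormΛ n) ((hB n).trans (le_max_left B 1)) (norm_nonneg _)
          exact mul_nonneg (by positivity) (mul_nonneg (by positivity) hD₁0)
      _ = b * ((n : ℝ) + 1) ^ l * ‖lam‖ ^ n := by rw [hbdef]; ring
  have hlower : ∀ᶠ n : ℕ in atTop, a / ((n : ℝ) + 1) ^ l * ‖lam‖ ^ n ≤ ‖c n‖ := by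
    filter_upwards [hev] with n hn
    have hkey : ‖w‖ / 2 ≤ (‖lam‖⁻¹) ^ n * (((n : ℝ) + 1) ^ l * D₂) * ‖c n‖ := by
      refine le_trans hn.le ?_
      calc ‖x n‖ ≤ ‖Λ⁻¹ ^ n‖ * ‖c n‖ := Matrix.linfty_opNorm_mulVec _ _
        _ ≤ (‖lam‖⁻¹) ^ n * (((n : ℝ) + 1) ^ l * D₂) * ‖c n‖ :=
            mul_le_mul_of_nonneg_right (hnormInv n) (norm_nonneg _)
    have h4 : (‖lam‖⁻¹) ^ n * ‖lam‖ ^ n = 1 := by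
      rw [← mul_pow, inv_mul_cancel₀ (ne_of_gt hr0), one_pow]
    have hkey2 : (‖w‖ / 2) * ‖lam‖ ^ n ≤ ((n : ℝ) + 1) ^ l * D₂ * ‖c n‖ := by
      have h3 := mul_le_mul_of_nonneg_right hkey (pow_nonneg (norm_nonneg lam) n)
      calc (‖w‖ / 2) * ‖lam‖ ^ n
          ≤ (‖lam‖⁻¹) ^ n * (((n : ℝ) + 1) ^ l * D₂) * ‖c n‖ * ‖lam‖ ^ n := h3
        _ = ((‖lam‖⁻¹) ^ n * ‖lam‖ ^ n) * ((((n : ℝ) + 1) ^ l * D₂) * ‖c n‖) := by ring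
        _ = ((n : ℝ) + 1) ^ l * D₂ * ‖c n‖ := by rw [h4, one_mul]
    have hn1 : ((n : ℝ) + 1) ^ l ≠ 0 := by positivity
    have heq : a / ((n : ℝ) + 1) ^ l * ‖lam‖ ^ n
        = ((‖w‖ / 2) * ‖lam‖ ^ n) / (((n : ℝ) + 1) ^ l * D₂) := by
      rw [hadef]
      field_simp [hD₂ne, hn1]
    rw [heq, div_le_iff₀ (mul_pos (by positivity) hD₂pos)]
    exact hkey2.trans_eq (by ring)
  refine tendsto_of_tendsto_of_tendsto_of_le_of_le'
    (tendsto_lower_aux a ‖lam‖ hapos hr0 l) (tendsto_upper_aux b ‖lam‖ hbpos hr0 l) ?_ ?_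
  · filter_upwards [hlower] with n hn
    exact Real.rpow_le_rpow
      (mul_nonneg (div_nonneg hapos.le (by positivity)) (pow_nonneg (norm_nonneg _) n)) hn
      (by positivity)
  · filter_upwards [] with n
    exact Real.rpow_le_rpow (norm_nonneg _) (hupper n) (by positivity)
end
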